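/- Let X = {0,1}^{2m}, let σ : X → X swap the left and right halves of its input, and let ρ be the uniform distribution on X (which is σ-invariant). Let A be a learner with variable-and-label symmetry with respect to σ, meaning that for every labeled dataset ((x_1,y_1),…,(x_n,y_n)) and every x ∈ X one has A((σx_1, 1−y_1),…,(σx_n, 1−y_n))(x) = 1 − A((x_1,y_1),…,(x_n,y_n))(σx). If n ≤ 2^{m−1}, then, when X_1,…,X_n are drawn i.i.d. from ρ and D = ((X_1,h≥(X_1)),…,(X_n,h≥(X_n))), the probability that A(D) ≠ h≥ is at least 1/4. -/

import Mathlib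

open MeasureTheory ENNReal NNReal

/-- `LEFT(x) = Σ_{i<m} x_i 2^i` for `x ∈ {0,1}^{2m}`. -/
def LEFT (m : ℕ) (x : Fin (2 * m) → Bool) : ℕ :=
  ∑ i : Fin m, if x ⟨i.val, by have := i.isLt; omega⟩ then 2 ^ i.val else 0

/-- `RIGHT(x) = Σ_{i<m} x_{m+i} 2^i` for `x ∈ {0,1}^{2m}`. -/
def RIGHT (m : ℕ) (x : Fin (2 * m) → Bool) : ℕ :=
  ∑ i : Fin m, if x ⟨m + i.val, by have := i.isLt; omega⟩ then 2 ^ i.val else 0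

/-- `h≥(x) = 1` iff `LEFT(x) ≥ RIGHT(x)`. -/
def hGe (m : ℕ) (x : Fin (2 * m) → Bool) : Bool := decide (RIGHT m x ≤ LEFT m x)

/-- The involution `σ` on `{0,1}^{2m}` swapping the left and right halves. -/
def swapHalves (m : ℕ) (x : Fin (2 * m) → Bool) : Fin (2 * m) → Bool := fun j =>
  if h : j.val < m then x ⟨m + j.val, by omega⟩
  else x ⟨j.val - m, by have := j.isLt; omega⟩

/-! ### Auxiliary lemmas -/

def bval {m : ℕ} (b : Fin m → Bool) : ℕ := ∑ i : Fin m, if b i then 2 ^ i.val else 0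

theorem bval_lt {m : ℕ} (b : Fin m → Bool) : bval b < 2 ^ m := by
  induction m with
  | zero => simp [bval]
  | succ k ih =>
    rw [bval, Fin.sum_univ_castSucc]
    have := ih (fun i => b i.castSucc)
    rw [bval] at this
    simp only [Fin.coe_castSucc, Fin.val_last]
    split <;> · simp [pow_succ]; omega

theorem bval_inj {m : ℕ} (b c : Fin m → Bool) (h : bval b = bval c) : b = c := by
  induction m with
  | zero => funext i; exact absurd i.isLt (by omega)
  | succ k ih =>
    rw [bval, Fin.sum_univ_castSucc, bval, Fin.sum_univ_castSucc] at h
    simp only [Fin.coe_castSucc, Fin.val_last] at h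
    have hb := bval_lt (fun i => b i.castSucc)
    have hc := bval_lt (fun i => c i.castSucc)
    rw [bval] at hb hc
    have htop : b (Fin.last k) = c (Fin.last k) := by
      by_contra hne
      rcases Bool.eq_false_or_eq_true (b (Fin.last k)) with h1 | h1 <;>
        rcases Bool.eq_false_or_eq_true (c (Fin.last k)) with h2 | h2 <;>
          simp [h1, h2] at hne h ⊢ <;> omega
    rw [htop] at h
    have hlow : (fun i : Fin k => b i.castSucc) = fun i => c i.castSucc := by
      apply ih; rw [bval, bval]; omega
    funext i
    rcases Fin.eq_castSucc_or_eq_last i with ⟨j, rfl⟩ | rfl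
    · exact congrFun hlow j
    · exact htop

def lhalf (m : ℕ) (x : Fin (2 * m) → Bool) : Fin m → Bool :=
  fun i => x ⟨i.val, by have := i.isLt; omega⟩
def rhalf (m : ℕ) (x : Fin (2 * m) → Bool) : Fin m → Bool :=
  fun i => x ⟨m + i.val, by have := i.isLt; omega⟩

theorem LEFT_eq (m : ℕ) (x : Fin (2 * m) → Bool) : LEFT m x = bval (lhalf m x) := rfl
theorem RIGHT_eq (m : ℕ) (x : Fin (2 * m) → Bool) : RIGHT m x = bval (rhalf m x) := rfl

theorem swap_invol (m : ℕ) (x : Fin (2 * m) → Bool) :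
    swapHalves m (swapHalves m x) = x := by
  funext j
  unfold swapHalves
  have hj := j.isLt
  rcases lt_or_ge j.val m with h | h
  · rw [dif_pos h, dif_neg (show ¬ (m + j.val < m) by omega)]
    congr 1; exact Fin.ext (by show m + j.val - m = j.val; omega)
  · rw [dif_neg (show ¬ (j.val < m) from by omega), dif_pos (show j.val - m < m by omega)]
    congr 1; exact Fin.ext (by show m + (j.val - m) = j.val; omega)

theorem swap_bijective (m : ℕ) : Function.Bijective (swapHalves m) :=
  Function.bijective_iff_has_inverse.mpr ⟨swapHalves m, swap_invol m, swap_invol m⟩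

theorem LEFT_swap (m : ℕ) (x : Fin (2 * m) → Bool) : LEFT m (swapHalves m x) = RIGHT m x := by
  unfold LEFT RIGHT swapHalves
  refine Finset.sum_congr rfl fun i _ => ?_
  rw [dif_pos i.isLt]

theorem RIGHT_swap (m : ℕ) (x : Fin (2 * m) → Bool) : RIGHT m (swapHalves m x) = LEFT m x := by
  unfold LEFT RIGHT swapHalves
  refine Finset.sum_congr rfl fun i _ => ?_
  rw [dif_neg (show ¬ (m + i.val < m) by omega)]
  congr 1
  ext
  simp

theorem hGe_swap {m : ℕ} {x : Fin (2 * m) → Bool} (h : LEFT m x ≠ RIGHT m x) :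
    hGe m (swapHalves m x) = !(hGe m x) := by
  unfold hGe
  rw [LEFT_swap, RIGHT_swap]
  rcases lt_or_gt_of_ne h with h' | h'
  · simp [le_of_lt h', not_le.mpr h']
  · simp [le_of_lt h', not_le.mpr h']

theorem card_eqset_le (m : ℕ) :
    Fintype.card {x : Fin (2 * m) → Bool // LEFT m x = RIGHT m x} ≤ 2 ^ m := by
  have : Fintype.card {x : Fin (2 * m) → Bool // LEFT m x = RIGHT m x}
      ≤ Fintype.card (Fin m → Bool) := by
    apply Fintype.card_le_of_injective (fun x => lhalf m x.1)
    rintro ⟨x, hx⟩ ⟨y, hy⟩ h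
    simp only at h
    have hr : rhalf m x = rhalf m y := by
      apply bval_inj
      rw [← RIGHT_eq, ← RIGHT_eq, ← hx, ← hy, LEFT_eq, LEFT_eq, h]
    ext j
    rcases lt_or_ge j.val m with hj | hj
    · have := congrFun h ⟨j.val, hj⟩
      simpa [lhalf] using this
    · have := congrFun hr ⟨j.val - m, by have := j.isLt; omega⟩
      simp only [rhalf] at this
      convert this using 2 <;> (ext; simp; omega)
  simpa using this

/-- The uniform measure is invariant under a bijection of a finite type. -/
theorem uniform_preserving {α : Type*} [Fintype α] [Nonempty α] [MeasurableSpace α]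
    [MeasurableSingletonClass α] (f : α → α) (hf : Function.Bijective f) :
    MeasurePreserving f (PMF.uniformOfFintype α).toMeasure (PMF.uniformOfFintype α).toMeasure := by
  classical
  constructor
  · exact measurable_of_countable f
  · ext s hs
    rw [Measure.map_apply (measurable_of_countable f) hs]
    rw [PMF.toMeasure_uniformOfFintype_apply _ (hs.preimage (measurable_of_countable f)),
        PMF.toMeasure_uniformOfFintype_apply _ hs]
    congr 2
    rw [← Nat.card_eq_fintype_card, ← Nat.card_eq_fintype_card]
    have he : f ⁻¹' s = ⇑(Equiv.ofBijective f hf) ⁻¹' s := rfl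
    rw [he, ← Equiv.image_symm_eq_preimage (Equiv.ofBijective f hf) s]
    exact Nat.card_image_of_injective (Equiv.ofBijective f hf).symm.injective s

theorem symmetric_learner_fails_hGe
    (m : ℕ) (hm : 1 ≤ m)
    (n : ℕ) (hn : n ≤ 2 ^ (m - 1))
    (A : (Fin n → (Fin (2 * m) → Bool) × Bool) → ((Fin (2 * m) → Bool) → Bool))
    (hsym : ∀ (D : Fin n → (Fin (2 * m) → Bool) × Bool) (x : Fin (2 * m) → Bool),
      A (fun i => (swapHalves m (D i).1, !(D i).2)) x = !(A D (swapHalves m x))) :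
    let ρ : Measure (Fin (2 * m) → Bool) :=
      (PMF.uniformOfFintype (Fin (2 * m) → Bool)).toMeasure
    (Measure.pi fun _ : Fin n => ρ)
        {ω | A (fun i => (ω i, hGe m (ω i))) ≠ hGe m} ≥ 1 / 4 := by
  classical
  intro ρ
  set μ := Measure.pi fun _ : Fin n => ρ with hμ
  set F : Set (Fin n → (Fin (2 * m) → Bool)) := {ω | A (fun i => (ω i, hGe m (ω i))) ≠ hGe m} with hF
  set S : Set (Fin (2 * m) → Bool) := {x | LEFT m x ≠ RIGHT m x} with hS
  set T : (Fin n → (Fin (2 * m) → Bool)) → (Fin n → (Fin (2 * m) → Bool)) :=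
    fun ω i => swapHalves m (ω i) with hT
  have hmeasF : MeasurableSet F := F.to_countable.measurableSet
  have hTpres : MeasurePreserving T μ μ :=
    measurePreserving_pi _ _ (fun _ => uniform_preserving (swapHalves m) (swap_bijective m))
  -- the good set is contained in F ∪ T⁻¹ F
  have hsub : Set.pi Set.univ (fun _ : Fin n => S) ⊆ F ∪ T ⁻¹' F := by
    intro ω hω
    by_contra hcon
    simp only [Set.mem_union, not_or] at hcon
    obtain ⟨h1, h2⟩ := hcon
    simp only [hF, Set.mem_setOf_eq, not_not, Set.mem_preimage] at h1 h2
    -- h1 : A (D ω) = hGe m ; h2 : A (D (T ω)) = hGe m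
    have hlab : (fun i => (T ω i, hGe m (T ω i)))
        = fun i => (swapHalves m (ω i), !(hGe m (ω i))) := by
      funext i
      have hi : LEFT m (ω i) ≠ RIGHT m (ω i) := hω i (Set.mem_univ i)
      simp only [hT]
      rw [hGe_swap hi]
    have key := hsym (fun i => (ω i, hGe m (ω i))) (fun _ => false)
    simp only at key
    rw [← hlab] at key
    rw [h2, h1] at key
    have hzero : swapHalves m (fun _ : Fin (2*m) => false) = (fun _ => false) := by
      funext j; unfold swapHalves; split <;> rfl
    rw [hzero] at key
    have : hGe m (fun _ => false) = true := by
      unfold hGe RIGHT LEFT; simp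
    rw [this] at key
    simp at key
  -- probability of the good set
  have hρS : ((2 ^ (2 * m) - 2 ^ m : ℕ) : ℝ≥0∞) / ((2 ^ (2 * m) : ℕ) : ℝ≥0∞) ≤ ρ S := by
    have hmeasS : MeasurableSet S := S.to_countable.measurableSet
    rw [PMF.toMeasure_uniformOfFintype_apply _ hmeasS]
    have hcardX : Fintype.card (Fin (2 * m) → Bool) = 2 ^ (2 * m) := by
      simp
    have hcardS : 2 ^ (2 * m) - 2 ^ m ≤ Nat.card S := by
      have h1 : Fintype.card {x : Fin (2 * m) → Bool // ¬ (LEFT m x = RIGHT m x)}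
          = Fintype.card (Fin (2 * m) → Bool)
            - Fintype.card {x : Fin (2 * m) → Bool // LEFT m x = RIGHT m x} :=
        Fintype.card_subtype_compl _
      have h2 : Nat.card S = Fintype.card {x : Fin (2 * m) → Bool // ¬ (LEFT m x = RIGHT m x)} := by
        rw [Nat.card_eq_fintype_card]
        apply Fintype.card_congr
        exact Equiv.subtypeEquivRight (fun x => Iff.rfl)
      have h3 := Fintype.card_subtype_le (fun x : Fin (2 * m) → Bool => LEFT m x = RIGHT m x)
      rw [hcardX] at h3
      rw [h2, h1, hcardX]
      have := card_eqset_le m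
      omega
    rw [hcardX]
    apply ENNReal.div_le_div_right
    calc ((2 ^ (2 * m) - 2 ^ m : ℕ) : ℝ≥0∞) ≤ (Nat.card S : ℝ≥0∞) := by exact_mod_cast hcardS
      _ = _ := by
          rw [Nat.card_eq_fintype_card]
  -- (ρ S)^n ≥ 1/2
  have hpow : (1 / 2 : ℝ≥0∞) ≤ (ρ S) ^ n := by
    have hreal : (1 / 2 : ℝ) ≤ (((2 ^ (2 * m) - 2 ^ m : ℕ) : ℝ) / ((2 ^ (2 * m) : ℕ) : ℝ)) ^ n := by
      have hps : (2 : ℕ) ^ m ≤ 2 ^ (2 * m) := Nat.pow_le_pow_right (by norm_num) (by omega)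
      push_cast [Nat.cast_sub hps]
      have hm2 : (0:ℝ) < 2 ^ m := by positivity
      have hxle : (1 : ℝ) - (2 ^ m)⁻¹
          ≤ ((2 ^ (2 * m) : ℝ) - 2 ^ m) / (2 ^ (2 * m) : ℝ) := by
        rw [div_eq_mul_inv, sub_mul]
        rw [show (2 : ℝ) ^ (2 * m) = 2 ^ m * 2 ^ m by rw [← pow_add]; ring_nf]
        field_simp
        exact le_rfl
      have hber : (1 : ℝ) - n * (2 ^ m)⁻¹ ≤ ((1 : ℝ) - (2 ^ m)⁻¹) ^ n := by
        have h' := one_add_mul_le_pow (a := (-(2 ^ m)⁻¹ : ℝ))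
          (by
            have h1 : ((2:ℝ) ^ m)⁻¹ ≤ 1 := by
              rw [inv_le_one_iff₀]; right; exact one_le_pow₀ (by norm_num)
            linarith) n
        calc (1 : ℝ) - n * (2 ^ m)⁻¹ = 1 + n * (-(2 ^ m)⁻¹) := by ring
          _ ≤ (1 + -(2 ^ m)⁻¹) ^ n := h'
          _ = ((1 : ℝ) - (2 ^ m)⁻¹) ^ n := by ring_nf
      have hhalf : (1 / 2 : ℝ) ≤ 1 - n * (2 ^ m)⁻¹ := by
        have h2m : (2:ℝ) ^ m = 2 * 2 ^ (m - 1) := by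
          conv_lhs => rw [show m = (m - 1) + 1 by omega, pow_succ]
          exact mul_comm _ _
        have hnle : (n : ℝ) ≤ 2 ^ (m - 1) := by exact_mod_cast hn
        have hp : (0 : ℝ) < 2 ^ (m - 1) := by positivity
        rw [h2m]
        have hmul : (n : ℝ) * (2 * 2 ^ (m - 1))⁻¹ ≤ 2 ^ (m - 1) * (2 * 2 ^ (m - 1))⁻¹ :=
          mul_le_mul_of_nonneg_right hnle (by positivity)
        have he : (2:ℝ) ^ (m - 1) * (2 * 2 ^ (m - 1))⁻¹ = 1 / 2 := by
          field_simp
        linarith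
      have hnn : (0 : ℝ) ≤ 1 - (2 ^ m)⁻¹ := by
        have h0 : (1:ℝ) ≤ 2 ^ m := one_le_pow₀ (by norm_num)
        have h1 : ((2:ℝ) ^ m)⁻¹ ≤ 1 := by
          rw [inv_le_one_iff₀]
          right
          exact h0
        linarith
      calc (1 / 2 : ℝ) ≤ 1 - n * (2 ^ m)⁻¹ := hhalf
        _ ≤ ((1 : ℝ) - (2 ^ m)⁻¹) ^ n := hber
        _ ≤ (((2 ^ (2 * m) : ℝ) - 2 ^ m) / (2 ^ (2 * m) : ℝ)) ^ n := by
            apply pow_le_pow_left₀ hnn hxle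
    have hq : (1 / 2 : ℝ≥0∞) ≤ (((2 ^ (2 * m) - 2 ^ m : ℕ) : ℝ≥0∞) / ((2 ^ (2 * m) : ℕ) : ℝ≥0∞)) ^ n := by
      have hbpos : (0:ℝ) < ((2 ^ (2 * m) : ℕ) : ℝ) := by positivity
      have hdiv : ((2 ^ (2 * m) - 2 ^ m : ℕ) : ℝ≥0∞) / ((2 ^ (2 * m) : ℕ) : ℝ≥0∞)
          = ENNReal.ofReal (((2 ^ (2 * m) - 2 ^ m : ℕ) : ℝ) / ((2 ^ (2 * m) : ℕ) : ℝ)) := by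
        rw [ENNReal.ofReal_div_of_pos hbpos, ENNReal.ofReal_natCast, ENNReal.ofReal_natCast]
      rw [hdiv, ← ENNReal.ofReal_pow (by positivity)]
      calc (1/2 : ℝ≥0∞) = ENNReal.ofReal (1/2) := by
            rw [ENNReal.ofReal_div_of_pos (by norm_num)]
            norm_num
        _ ≤ _ := ENNReal.ofReal_le_ofReal hreal
    calc (1 / 2 : ℝ≥0∞) ≤ _ := hq
      _ ≤ (ρ S) ^ n := pow_le_pow_left' hρS n
  -- μ of the good set
  have hG : μ (Set.pi Set.univ (fun _ : Fin n => S)) = (ρ S) ^ n := by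
    rw [hμ, Measure.pi_pi]
    simp
  -- conclude
  have hchain : (1 / 2 : ℝ≥0∞) ≤ 2 * μ F := by
    calc (1 / 2 : ℝ≥0∞) ≤ (ρ S) ^ n := hpow
      _ = μ (Set.pi Set.univ (fun _ : Fin n => S)) := hG.symm
      _ ≤ μ (F ∪ T ⁻¹' F) := measure_mono hsub
      _ ≤ μ F + μ (T ⁻¹' F) := measure_union_le _ _
      _ = μ F + μ F := by rw [hTpres.measure_preimage hmeasF.nullMeasurableSet]
      _ = 2 * μ F := by ring
  show (1/4 : ℝ≥0∞) ≤ μ F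
  have h2top : (2:ℝ≥0∞) ≠ ⊤ := by norm_num
  calc (1/4 : ℝ≥0∞) = 2⁻¹ * (1/2) := by
        rw [one_div, one_div, show (4:ℝ≥0∞) = 2 * 2 by norm_num,
          ENNReal.mul_inv (Or.inl two_ne_zero) (Or.inl h2top)]
    _ ≤ 2⁻¹ * (2 * μ F) := mul_le_mul_right hchain _
    _ = μ F := by rw [← mul_assoc, ENNReal.inv_mul_cancel two_ne_zero h2top, one_mul]
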